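/- For every monoid H, every irreducible element of the reduced finitary power monoid P_{fin,1}(H) is a quark of P_{fin,1}(H). -/
import Mathlib


open scoped Pointwise

/-- Two-sided divisibility in a monoid: `x` divides `y` if `y = u * x * v` for some `u, v`. -/
def DvdTS {M : Type*} [Monoid M] (x y : M) : Prop := ∃ u v : M, y = u * x * v

/-- A unit-divisor is a divisor of the identity. -/
def IsUnitDivisor {M : Type*} [Monoid M] (x : M) : Prop := DvdTS x 1

/-- `x` is a proper divisor of `y` if `x` divides `y` but `y` does not divide `x`. -/
def IsProperDivisorTS {M : Type*} [Monoid M] (x y : M) : Prop := DvdTS x y ∧ ¬ DvdTS y x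

/-- An atom is a non-unit that is not a product of two non-units. -/
def IsAtomTS {M : Type*} [Monoid M] (a : M) : Prop :=
  ¬ IsUnit a ∧ ∀ b c : M, a = b * c → IsUnit b ∨ IsUnit c

/-- A quark is a non-unit-divisor all of whose proper divisors are unit-divisors. -/
def IsQuarkTS {M : Type*} [Monoid M] (a : M) : Prop :=
  ¬ IsUnitDivisor a ∧ ∀ b : M, IsProperDivisorTS b a → IsUnitDivisor b

/-- An irreducible is a non-unit-divisor with no factorization `a = b * c` into proper
divisors that are not unit-divisors. -/
def IsIrredTS {M : Type*} [Monoid M] (a : M) : Prop :=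
  ¬ IsUnitDivisor a ∧
    ¬ ∃ b c : M, a = b * c ∧ IsProperDivisorTS b a ∧ IsProperDivisorTS c a ∧
      ¬ IsUnitDivisor b ∧ ¬ IsUnitDivisor c

def DedekindFiniteM (M : Type*) [Monoid M] : Prop := ∀ x y : M, x * y = 1 → y * x = 1

/-- ACC on principal two-sided ideals: no infinite sequence of consecutive proper divisors. -/
def ACCPrincipalTS (M : Type*) [Monoid M] : Prop :=
  ¬ ∃ f : ℕ → M, ∀ n : ℕ, IsProperDivisorTS (f (n + 1)) (f n)

/-- Factorable: every non-unit-divisor is a (non-empty) product of irreducibles. -/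
def FactorableM (M : Type*) [Monoid M] : Prop :=
  ∀ x : M, ¬ IsUnitDivisor x →
    ∃ l : List M, l ≠ [] ∧ (∀ a ∈ l, IsIrredTS a) ∧ l.prod = x

/-- Atomic: every non-unit-divisor is a (non-empty) product of atoms. -/
def AtomicM (M : Type*) [Monoid M] : Prop :=
  ∀ x : M, ¬ IsUnitDivisor x →
    ∃ l : List M, l ≠ [] ∧ (∀ a ∈ l, IsAtomTS a) ∧ l.prod = x

/-- The finitary power monoid: non-empty finite subsets of `H` under setwise multiplication. -/
def PfinM (H : Type*) [Monoid H] : Submonoid (Set H) where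
  carrier := {X : Set H | X.Finite ∧ X.Nonempty}
  mul_mem' := fun hX hY => ⟨hX.1.mul hY.1, hX.2.mul hY.2⟩
  one_mem' := ⟨Set.finite_one, 1, Set.mem_one.mpr rfl⟩

/-- The restricted finitary power monoid: non-empty finite subsets of `H` containing a unit. -/
def PfinTimes (H : Type*) [Monoid H] : Submonoid (Set H) where
  carrier := {X : Set H | X.Finite ∧ ∃ u ∈ X, IsUnit u}
  mul_mem' := by
    rintro X Y ⟨hXf, u, hu, hu'⟩ ⟨hYf, v, hv, hv'⟩
    exact ⟨hXf.mul hYf, u * v, Set.mul_mem_mul hu hv, hu'.mul hv'⟩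
  one_mem' := ⟨Set.finite_one, 1, Set.mem_one.mpr rfl, isUnit_one⟩

/-- The reduced finitary power monoid: finite subsets of `H` containing `1`. -/
def PfinOne (H : Type*) [Monoid H] : Submonoid (Set H) where
  carrier := {X : Set H | X.Finite ∧ (1 : H) ∈ X}
  mul_mem' := by
    rintro X Y ⟨hXf, hX1⟩ ⟨hYf, hY1⟩
    exact ⟨hXf.mul hYf, by simpa using Set.mul_mem_mul hX1 hY1⟩
  one_mem' := ⟨Set.finite_one, Set.mem_one.mpr rfl⟩

lemma mem_PfinM {H : Type*} [Monoid H] {X : Set H} :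
    X ∈ PfinM H ↔ X.Finite ∧ X.Nonempty := Iff.rfl

lemma mem_PfinTimes {H : Type*} [Monoid H] {X : Set H} :
    X ∈ PfinTimes H ↔ X.Finite ∧ ∃ u ∈ X, IsUnit u := Iff.rfl

lemma mem_PfinOne {H : Type*} [Monoid H] {X : Set H} :
    X ∈ PfinOne H ↔ X.Finite ∧ (1 : H) ∈ X := Iff.rfl

/-- Acyclic: `u * x * v ≠ x` whenever `u` or `v` is a non-unit. -/
def AcyclicM (M : Type*) [Monoid M] : Prop :=
  ∀ u v x : M, (¬ IsUnit u ∨ ¬ IsUnit v) → u * x * v ≠ x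

/-- Unit-cancellative: `x * y ≠ x ≠ y * x` whenever `y` is a non-unit. -/
def UnitCancellativeM (M : Type*) [Monoid M] : Prop :=
  ∀ x y : M, ¬ IsUnit y → x * y ≠ x ∧ y * x ≠ x

/-- Strongly unit-cancellative: `x * y ≠ x ≠ y * x` whenever `y ≠ 1`. -/
def StrongUnitCancellativeM (M : Type*) [Monoid M] : Prop :=
  ∀ x y : M, y ≠ 1 → x * y ≠ x ∧ y * x ≠ x

/-- Torsion-free: the identity is the only element with finitely many powers. -/
def TorsionFreeM (M : Type*) [Monoid M] : Prop :=
  ∀ x : M, (Set.range fun k : ℕ => x ^ k).Finite → x = 1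

/-- Cancellative monoid. -/
def CancellativeM (M : Type*) [Monoid M] : Prop :=
  ∀ a x y : M, (a * x = a * y → x = y) ∧ (x * a = y * a → x = y)

/-- The set of lengths of (irreducible) factorizations of `x`, with the conventions
`L(1) = {0}` and `L(u) = ∅` for a unit-divisor `u ≠ 1`. -/
def LengthSet {M : Type*} [Monoid M] (x : M) : Set ℕ :=
  {n | (x = 1 ∧ n = 0) ∨
    (¬ IsUnitDivisor x ∧
      ∃ l : List M, l.length = n ∧ l ≠ [] ∧ (∀ a ∈ l, IsIrredTS a) ∧ l.prod = x)}

/-- The system of lengths: the family of non-empty length sets. -/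
def SystemOfLengths (M : Type*) [Monoid M] : Set (Set ℕ) :=
  {L | L.Nonempty ∧ ∃ x : M, LengthSet x = L}

section Aux

variable {H : Type*} [Monoid H]

lemma one_mem_coe (X : PfinOne H) : (1 : H) ∈ (X : Set H) := X.2.2

lemma eq_of_coe_sub {A B : PfinOne H} (h1 : (A : Set H) ⊆ (B : Set H))
    (h2 : (B : Set H) ⊆ (A : Set H)) : A = B :=
  Subtype.ext (Set.Subset.antisymm h1 h2)

lemma sub_mul_left (A B : PfinOne H) : (A : Set H) ⊆ ((A * B : PfinOne H) : Set H) := by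
  intro a ha
  have : a * 1 ∈ (A : Set H) * (B : Set H) := Set.mul_mem_mul ha (one_mem_coe B)
  simpa using this

lemma sub_mul_right (A B : PfinOne H) : (B : Set H) ⊆ ((A * B : PfinOne H) : Set H) := by
  intro b hb
  have : (1 : H) * b ∈ (A : Set H) * (B : Set H) := Set.mul_mem_mul (one_mem_coe A) hb
  simpa using this

lemma dvd_coe_sub {A B : PfinOne H} (h : DvdTS A B) : (A : Set H) ⊆ (B : Set H) := by
  obtain ⟨u, v, huv⟩ := h
  rw [huv]
  exact (sub_mul_right u A).trans (sub_mul_left (u * A) v)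

lemma unitdiv_iff {A : PfinOne H} : IsUnitDivisor A ↔ A = 1 := by
  constructor
  · intro h
    have h1 : (A : Set H) ⊆ ((1 : PfinOne H) : Set H) := dvd_coe_sub h
    refine eq_of_coe_sub h1 ?_
    intro x hx
    have hx1 : x = 1 := by simpa [Submonoid.coe_one, Set.mem_one] using hx
    rw [hx1]; exact one_mem_coe A
  · rintro rfl
    exact ⟨1, 1, by simp⟩

lemma exists_ne_one {A : PfinOne H} (h : A ≠ 1) : ∃ r ∈ (A : Set H), r ≠ 1 := by
  by_contra hc
  push_neg at hc
  refine h (eq_of_coe_sub ?_ ?_)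
  · intro x hx
    simpa [Submonoid.coe_one, Set.mem_one] using hc x hx
  · intro x hx
    have hx1 : x = 1 := by simpa [Submonoid.coe_one, Set.mem_one] using hx
    rw [hx1]; exact one_mem_coe A

lemma mkB (X : PfinOne H) {r : H} (hr1 : r ≠ 1) : ((X : Set H) \ {r}) ∈ PfinOne H :=
  ⟨X.2.1.subset Set.diff_subset, ⟨one_mem_coe X, fun h => hr1 (by simpa using h.symm)⟩⟩

lemma key1 {X R : PfinOne H} (hirr : IsIrredTS X) (hR1 : R ≠ 1) (hRX : R ≠ X)
    (hXR : X = X * R) : False := by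
  obtain ⟨r, hrR, hr1⟩ := exists_ne_one hR1
  have hRsub : (R : Set H) ⊆ (X : Set H) := by
    have := sub_mul_right X R
    rwa [← hXR] at this
  have hrX : r ∈ (X : Set H) := hRsub hrR
  set B : PfinOne H := ⟨(X : Set H) \ {r}, mkB X hr1⟩ with hBdef
  have hBcoe : (B : Set H) = (X : Set H) \ {r} := rfl
  have hXBR : X = B * R := by
    apply Subtype.ext
    rw [Submonoid.coe_mul]
    apply Set.Subset.antisymm
    · intro x hx
      by_cases hxr : x = r
      · subst hxr
        have : (1 : H) * x ∈ (B : Set H) * (R : Set H) :=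
          Set.mul_mem_mul ⟨one_mem_coe X, fun h => hr1 (by simpa using h.symm)⟩ hrR
        simpa using this
      · have : x * 1 ∈ (B : Set H) * (R : Set H) :=
          Set.mul_mem_mul ⟨hx, hxr⟩ (one_mem_coe R)
        simpa using this
    · have h1 : (B : Set H) * (R : Set H) ⊆ (X : Set H) * (R : Set H) :=
        Set.mul_subset_mul_right (by rw [hBcoe]; exact Set.diff_subset)
      have h2 : (X : Set H) * (R : Set H) = ((X * R : PfinOne H) : Set H) :=
        (Submonoid.coe_mul ..).symm
      rw [h2, ← hXR] at h1
      exact h1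
  by_cases hB1 : B = 1
  · rw [hB1, one_mul] at hXBR
    exact hRX hXBR.symm
  · refine hirr.2 ⟨B, R, hXBR, ⟨⟨1, R, by rw [one_mul]; exact hXBR⟩, ?_⟩,
      ⟨⟨B, 1, by rw [mul_one]; exact hXBR⟩, ?_⟩,
      fun h => hB1 (unitdiv_iff.mp h), fun h => hR1 (unitdiv_iff.mp h)⟩
    · intro hXB
      have := dvd_coe_sub hXB hrX
      exact this.2 rfl
    · intro hXR'
      exact hRX (eq_of_coe_sub hRsub (dvd_coe_sub hXR'))

lemma key2 {X R : PfinOne H} (hirr : IsIrredTS X) (hR1 : R ≠ 1) (hRX : R ≠ X)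
    (hXR : X = R * X) : False := by
  obtain ⟨r, hrR, hr1⟩ := exists_ne_one hR1
  have hRsub : (R : Set H) ⊆ (X : Set H) := by
    have := sub_mul_left R X
    rwa [← hXR] at this
  have hrX : r ∈ (X : Set H) := hRsub hrR
  set B : PfinOne H := ⟨(X : Set H) \ {r}, mkB X hr1⟩ with hBdef
  have hBcoe : (B : Set H) = (X : Set H) \ {r} := rfl
  have hXBR : X = R * B := by
    apply Subtype.ext
    rw [Submonoid.coe_mul]
    apply Set.Subset.antisymm
    · intro x hx
      by_cases hxr : x = r
      · subst hxr
        have : x * (1 : H) ∈ (R : Set H) * (B : Set H) :=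
          Set.mul_mem_mul hrR ⟨one_mem_coe X, fun h => hr1 (by simpa using h.symm)⟩
        simpa using this
      · have : (1 : H) * x ∈ (R : Set H) * (B : Set H) :=
          Set.mul_mem_mul (one_mem_coe R) ⟨hx, hxr⟩
        simpa using this
    · have h1 : (R : Set H) * (B : Set H) ⊆ (R : Set H) * (X : Set H) :=
        Set.mul_subset_mul_left (by rw [hBcoe]; exact Set.diff_subset)
      have h2 : (R : Set H) * (X : Set H) = ((R * X : PfinOne H) : Set H) :=
        (Submonoid.coe_mul ..).symm
      rw [h2, ← hXR] at h1
      exact h1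
  by_cases hB1 : B = 1
  · rw [hB1, mul_one] at hXBR
    exact hRX hXBR.symm
  · refine hirr.2 ⟨R, B, hXBR, ⟨⟨1, B, by rw [one_mul]; exact hXBR⟩, ?_⟩,
      ⟨⟨R, 1, by rw [mul_one]; exact hXBR⟩, ?_⟩,
      fun h => hR1 (unitdiv_iff.mp h), fun h => hB1 (unitdiv_iff.mp h)⟩
    · intro hXR'
      exact hRX (eq_of_coe_sub hRsub (dvd_coe_sub hXR'))
    · intro hXB
      have := dvd_coe_sub hXB hrX
      exact this.2 rfl

end Aux

/-- every irreducible of `P_{fin,1}(H)` is a quark. -/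
theorem pfinOne_irreducible_is_quark {H : Type*} [Monoid H]
    (X : PfinOne H) (hX : IsIrredTS X) : IsQuarkTS X := by
  refine ⟨hX.1, ?_⟩
  rintro Y ⟨hYX, hXY⟩
  by_contra hY
  have hY1 : Y ≠ 1 := fun h => hY (unitdiv_iff.mpr h)
  obtain ⟨U, V, hUYV⟩ := hYX
  have hYX' : Y ≠ X := fun h => hXY ⟨1, 1, by rw [h, one_mul, mul_one]⟩
  set R : PfinOne H := Y * V with hRdef
  have hXUR : X = U * R := by rw [hRdef, ← mul_assoc]; exact hUYV
  have hR1 : R ≠ 1 := by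
    intro h
    apply hY1
    refine eq_of_coe_sub ?_ ?_
    · have h1 : (Y : Set H) ⊆ (R : Set H) := sub_mul_left Y V
      rw [h] at h1; exact h1
    · intro x hx
      have hx1 : x = 1 := by simpa [Submonoid.coe_one, Set.mem_one] using hx
      rw [hx1]; exact one_mem_coe Y
  by_cases hRX : R = X
  · have hXYV : X = Y * V := hRX.symm
    by_cases hV1 : V = 1
    · rw [hV1, mul_one] at hXYV
      exact hXY ⟨1, 1, by rw [hXYV, one_mul, mul_one]⟩
    · by_cases hVX : V = X
      · rw [hVX] at hXYV
        exact key2 hX hY1 hYX' hXYV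
      · have hVdvd : DvdTS V X := ⟨Y, 1, by rw [mul_one]; exact hXYV⟩
        have hVsub : (V : Set H) ⊆ (X : Set H) := dvd_coe_sub hVdvd
        refine hX.2 ⟨Y, V, hXYV, ⟨(⟨U, V, hUYV⟩ : DvdTS Y X), hXY⟩, ⟨hVdvd, ?_⟩,
          hY, fun h => hV1 (unitdiv_iff.mp h)⟩
        intro hXV
        exact hVX (eq_of_coe_sub hVsub (dvd_coe_sub hXV))
  · by_cases hU1 : U = 1
    · rw [hU1, one_mul] at hXUR
      exact hRX hXUR.symm
    · by_cases hUX : U = X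
      · rw [hUX] at hXUR
        exact key1 hX hR1 hRX hXUR
      · have hUdvd : DvdTS U X := ⟨1, R, by rw [one_mul]; exact hXUR⟩
        have hRdvd : DvdTS R X := ⟨U, 1, by rw [mul_one]; exact hXUR⟩
        have hUsub : (U : Set H) ⊆ (X : Set H) := dvd_coe_sub hUdvd
        have hRsub : (R : Set H) ⊆ (X : Set H) := dvd_coe_sub hRdvd
        refine hX.2 ⟨U, R, hXUR, ⟨hUdvd, ?_⟩, ⟨hRdvd, ?_⟩,
          fun h => hU1 (unitdiv_iff.mp h), fun h => hR1 (unitdiv_iff.mp h)⟩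
        · intro hXU
          exact hUX (eq_of_coe_sub hUsub (dvd_coe_sub hXU))
        · intro hXR'
          exact hRX (eq_of_coe_sub hRsub (dvd_coe_sub hXR'))
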